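/- Let (T(t))_{t≥0} be a C₀-semigroup on a Banach space X, K : [0,∞)×X → X collectively compact and separately continuous, B ⊆ X bounded, and suppose for each x₀ ∈ B there is a global mild solution x(·, x₀) of x(t) = T(t)x₀ + ∫₀ᵗ T(t−s)K(s, x(s))ds such that {x(t,x₀) : 0 ≤ t ≤ t₀, x₀ ∈ B} is bounded for every t₀ > 0. Then for fixed t₀ > 0 the set C = { ∫₀ᵗ T(t−s)K(s, x(s,x₀)) ds : x₀ ∈ B, t ∈ [0, t₀] } is precompact in X. -/

import Mathlib

open MeasureTheory

/-- Precompactness of the set of Duhamel integrals of mild solutions with initial data in a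
bounded set `B`, over a compact time interval `[0, t₀]`. -/
theorem stmt_12 (X : Type*) [NormedAddCommGroup X] [NormedSpace ℂ X] [CompleteSpace X]
    (T : ℝ → X →L[ℂ] X) (hT0 : T 0 = 1)
    (hTadd : ∀ s t : ℝ, 0 ≤ s → 0 ≤ t → T (s + t) = (T s).comp (T t))
    (hTcont : ∀ x : X, ContinuousOn (fun t => T t x) (Set.Ici 0))
    (K : ℝ → X → X)
    (hKt : ∀ x : X, ContinuousOn (fun s => K s x) (Set.Ici 0))
    (hKx : ∀ s : ℝ, 0 ≤ s → Continuous (K s))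
    (hcc : ∀ t₁ > (0:ℝ), ∀ B' : Set X, Bornology.IsBounded B' →
      IsCompact (closure (Set.image2 K (Set.Icc 0 t₁) B')))
    (B : Set X) (hB : Bornology.IsBounded B)
    (x : X → ℝ → X)
    (hxc : ∀ x₀ ∈ B, ContinuousOn (x x₀) (Set.Ici 0))
    (hmild : ∀ x₀ ∈ B, ∀ t : ℝ, 0 ≤ t →
      x x₀ t = T t x₀ + ∫ s in (0:ℝ)..t, (T (t - s)) (K s (x x₀ s)))
    (hbdd : ∀ t₁ > (0:ℝ),
      Bornology.IsBounded {z : X | ∃ x₀ ∈ B, ∃ t ∈ Set.Icc (0:ℝ) t₁, z = x x₀ t})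
    (t₀ : ℝ) (ht₀ : 0 < t₀) :
    IsCompact (closure {z : X | ∃ x₀ ∈ B, ∃ t ∈ Set.Icc (0:ℝ) t₀,
      z = ∫ s in (0:ℝ)..t, (T (t - s)) (K s (x x₀ s))}) := by
  classical
  set B' : Set X := {z : X | ∃ x₀ ∈ B, ∃ t ∈ Set.Icc (0:ℝ) t₀, z = x x₀ t} with hB'def
  have hB'bdd : Bornology.IsBounded B' := hbdd t₀ ht₀
  set D : Set X := closure (Set.image2 K (Set.Icc 0 t₀) B') with hDdef
  have hD : IsCompact D := hcc t₀ ht₀ B' hB'bdd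
  -- uniform bound on the operator norms via Banach–Steinhaus
  obtain ⟨M, hM⟩ : ∃ M, ∀ r : Set.Icc (0:ℝ) t₀, ‖T r‖ ≤ M := by
    apply banach_steinhaus
    intro y
    obtain ⟨C, hC⟩ := (isCompact_Icc : IsCompact (Set.Icc (0:ℝ) t₀)).exists_bound_of_continuousOn
      ((hTcont y).mono (fun r hr => hr.1))
    exact ⟨C, fun r => hC r r.2⟩
  -- joint continuity of (r, d) ↦ T r d on [0, t₀] × X
  have hφ : ContinuousOn (fun p : ℝ × X => T p.1 p.2)
      (Set.Icc 0 t₀ ×ˢ (Set.univ : Set X)) := by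
    rintro ⟨r₀, d₀⟩ ⟨hr₀, -⟩
    have hfst : Filter.Tendsto (fun p : ℝ × X => p.1)
        (nhdsWithin (r₀, d₀) (Set.Icc 0 t₀ ×ˢ (Set.univ : Set X)))
        (nhdsWithin r₀ (Set.Icc 0 t₀)) :=
      continuous_fst.continuousWithinAt.tendsto_nhdsWithin (fun p hp => hp.1)
    have h1 : Filter.Tendsto (fun p : ℝ × X => T p.1 d₀)
        (nhdsWithin (r₀, d₀) (Set.Icc 0 t₀ ×ˢ (Set.univ : Set X))) (nhds (T r₀ d₀)) :=
      (((hTcont d₀ r₀ hr₀.1).mono Set.Icc_subset_Ici_self).tendsto).comp hfst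
    have h2 : Filter.Tendsto (fun p : ℝ × X => T p.1 (p.2 - d₀))
        (nhdsWithin (r₀, d₀) (Set.Icc 0 t₀ ×ˢ (Set.univ : Set X))) (nhds 0) := by
      apply squeeze_zero_norm'
      · filter_upwards [self_mem_nhdsWithin] with p hp
        calc ‖T p.1 (p.2 - d₀)‖ ≤ ‖T p.1‖ * ‖p.2 - d₀‖ := (T p.1).le_opNorm _
          _ ≤ M * ‖p.2 - d₀‖ :=
            mul_le_mul_of_nonneg_right (hM ⟨p.1, hp.1⟩) (norm_nonneg _)
      · have : Filter.Tendsto (fun p : ℝ × X => M * ‖p.2 - d₀‖) (nhds (r₀, d₀))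
            (nhds (M * ‖d₀ - d₀‖)) :=
          (continuous_const.mul ((continuous_snd.sub continuous_const).norm)).tendsto _
        simpa using this.mono_left nhdsWithin_le_nhds
    have hsum := h2.add h1
    rw [zero_add] at hsum
    have heq : (fun p : ℝ × X => T p.1 (p.2 - d₀) + T p.1 d₀)
        = fun p : ℝ × X => T p.1 p.2 := by
      funext p; rw [map_sub]; abel
    rw [heq] at hsum
    exact hsum
  set E : Set X := (fun p : ℝ × X => T p.1 p.2) '' (Set.Icc 0 t₀ ×ˢ D) with hEdef
  have hE : IsCompact E := (isCompact_Icc.prod hD).image_of_continuousOn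
    (hφ.mono (Set.prod_mono_right (Set.subset_univ D)))
  set S : Set X := closure (convexHull ℝ (insert 0 E)) with hSdef
  have hScvx : Convex ℝ S := (convex_convexHull ℝ _).closure
  have hScl : IsClosed S := isClosed_closure
  have hS : IsCompact S := TotallyBounded.isCompact_of_isClosed
    ((totallyBounded_convexHull.mpr ((hE.insert 0).totallyBounded)).closure) hScl
  have h0S : (0:X) ∈ S := subset_closure (subset_convexHull ℝ _ (Set.mem_insert 0 E))
  set G : Set X := (fun p : ℝ × X => p.1 • p.2) '' (Set.Icc 0 t₀ ×ˢ S) with hGdef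
  have hG : IsCompact G := (isCompact_Icc.prod hS).image (continuous_fst.smul continuous_snd)
  have h0G : (0:X) ∈ G := ⟨(0, 0), ⟨⟨le_refl 0, ht₀.le⟩, h0S⟩, by simp⟩
  have hsub : {z : X | ∃ x₀ ∈ B, ∃ t ∈ Set.Icc (0:ℝ) t₀,
      z = ∫ s in (0:ℝ)..t, (T (t - s)) (K s (x x₀ s))} ⊆ G := by
    rintro z ⟨x₀, hx₀, t, ht, rfl⟩
    rcases eq_or_lt_of_le ht.1 with h0t | h0t
    · rw [← h0t, intervalIntegral.integral_same]; exact h0G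
    · set f : ℝ → X := fun s => T (t - s) (K s (x x₀ s)) with hfdef
      have hmem : ∀ s ∈ Set.Ioc (0:ℝ) t, f s ∈ E := by
        intro s hs
        refine ⟨(t - s, K s (x x₀ s)), ⟨⟨show (0:ℝ) ≤ t - s by linarith [hs.2], show t - s ≤ t₀ by linarith [hs.1, ht.2]⟩, ?_⟩, rfl⟩
        exact subset_closure (Set.mem_image2_of_mem ⟨hs.1.le, hs.2.trans ht.2⟩
          ⟨x₀, hx₀, s, ⟨hs.1.le, hs.2.trans ht.2⟩, rfl⟩)
      rw [intervalIntegral.integral_of_le ht.1]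
      by_cases hint : IntegrableOn f (Set.Ioc 0 t) volume
      · have hne : volume (Set.Ioc (0:ℝ) t) ≠ 0 := by
          simp only [Real.volume_Ioc]
          simpa using (by linarith : (0:ℝ) < t - 0)
        have hfin : volume (Set.Ioc (0:ℝ) t) ≠ ⊤ := measure_Ioc_lt_top.ne
        have hae : ∀ᵐ s ∂(volume.restrict (Set.Ioc (0:ℝ) t)), f s ∈ S := by
          filter_upwards [ae_restrict_mem measurableSet_Ioc] with s hs
          exact subset_closure (subset_convexHull ℝ _ (Set.mem_insert_of_mem _ (hmem s hs)))
        have havg := hScvx.set_average_mem hScl hne hfin hae hint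
        have hval : (volume (Set.Ioc (0:ℝ) t)).toReal = t := by
          simp [Real.volume_Ioc, ENNReal.toReal_ofReal ht.1]
        have hEq : (∫ s in Set.Ioc (0:ℝ) t, f s) = t • (⨍ s in Set.Ioc (0:ℝ) t, f s) := by
          rw [setAverage_eq, measureReal_def, hval, smul_inv_smul₀ (ne_of_gt h0t)]
        rw [hEq]
        exact ⟨(t, ⨍ s in Set.Ioc (0:ℝ) t, f s), ⟨⟨ht.1, ht.2⟩, havg⟩, rfl⟩
      · rw [integral_undef hint]; exact h0G
  exact hG.of_isClosed_subset isClosed_closure (closure_minimal hsub hG.isClosed)
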